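/- Let α > 0, ε > 0 and 0 < s < d, let h_ε^{-1} : ℝ → ℝ be the inverse of h_ε(γ) = γ·exp((γ² − α²)/(2ε)), and let C ∈ (s²/2, d²/2) satisfy ∫_s^d h_ε^{-1}(C − t²/2) dt = 0. Define u(y) = ∫_s^y h_ε^{-1}(C − t²/2) dt for y ∈ [s, d]. Then u(s) = u(d) = 0, u(y) > 0 for every y ∈ (s, d), u is strictly concave on [s, d], and u is differentiable with h_ε(u'(y)) = C − y²/2 for all y ∈ [s, d]; in particular u solves the Euler–Lagrange equation (e^{(u'(y)² − α²)/(2ε)}·u'(y))' + y = 0 on [s, d]. -/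

import Mathlib

open Set

theorem stmt_17 (α ε s d C : ℝ) (hα : 0 < α) (hε : 0 < ε) (hs : 0 < s) (hsd : s < d)
    (h hinv : ℝ → ℝ)
    (hh : ∀ γ : ℝ, h γ = γ * Real.exp ((γ ^ 2 - α ^ 2) / (2 * ε)))
    (hinv_left : Function.LeftInverse hinv h)
    (hinv_right : Function.RightInverse hinv h)
    (hC : C ∈ Ioo (s ^ 2 / 2) (d ^ 2 / 2))
    (hC0 : (∫ t in s..d, hinv (C - t ^ 2 / 2)) = 0)
    (u : ℝ → ℝ)
    (hu : ∀ y : ℝ, u y = ∫ t in s..y, hinv (C - t ^ 2 / 2)) :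
    u s = 0 ∧ u d = 0 ∧
    (∀ y ∈ Ioo s d, 0 < u y) ∧
    StrictConcaveOn ℝ (Icc s d) u ∧
    (∀ y ∈ Icc s d, HasDerivAt u (hinv (C - y ^ 2 / 2)) y ∧
      h (hinv (C - y ^ 2 / 2)) = C - y ^ 2 / 2) ∧
    (∀ y ∈ Icc s d,
      HasDerivAt (fun z : ℝ =>
        Real.exp ((deriv u z ^ 2 - α ^ 2) / (2 * ε)) * deriv u z) (-y) y) := by
  -- h is strictly monotone
  have hder : ∀ γ : ℝ, HasDerivAt h
      (Real.exp ((γ ^ 2 - α ^ 2) / (2 * ε)) * (1 + γ ^ 2 / ε)) γ := by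
    intro γ
    have h1 : HasDerivAt (fun x : ℝ => (x ^ 2 - α ^ 2) / (2 * ε)) (γ / ε) γ := by
      have := ((hasDerivAt_pow 2 γ).sub_const (α ^ 2)).div_const (2 * ε)
      refine this.congr_deriv ?_
      norm_num
      field_simp
    have h2 : HasDerivAt (fun x : ℝ => Real.exp ((x ^ 2 - α ^ 2) / (2 * ε)))
        (Real.exp ((γ ^ 2 - α ^ 2) / (2 * ε)) * (γ / ε)) γ := h1.exp
    have h3 := (hasDerivAt_id γ).mul h2
    have heq : h = fun x : ℝ => x * Real.exp ((x ^ 2 - α ^ 2) / (2 * ε)) := funext hh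
    rw [heq]
    refine h3.congr_deriv ?_
    simp only [id]
    field_simp
  have hmono : StrictMono h :=
    strictMono_of_hasDerivAt_pos hder (fun x => by positivity)
  have hsurj : Function.Surjective h := hinv_right.surjective
  -- hinv equals the order-iso inverse, hence continuous and strictly monotone
  have hinv_mono : StrictMono hinv := by
    intro x y hxy
    rcases lt_trichotomy (hinv x) (hinv y) with h1 | h1 | h1
    · exact h1
    · exact absurd (by rw [← hinv_right x, ← hinv_right y, h1]) hxy.ne
    · exact absurd (by rw [← hinv_right x, ← hinv_right y]; exact hmono h1) (not_lt.mpr hxy.le)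
  have hinv_cont : Continuous hinv := by
    have : hinv = ⇑(StrictMono.orderIsoOfSurjective h hmono hsurj).symm := by
      funext x
      apply hmono.injective
      rw [hinv_right x]
      exact (StrictMono.orderIsoOfSurjective_self_symm_apply h hmono hsurj x).symm
    rw [this]
    exact OrderIso.continuous _
  -- the integrand
  set f : ℝ → ℝ := fun t => hinv (C - t ^ 2 / 2) with hf
  have hfc : Continuous f := hinv_cont.comp (by continuity)
  have hueq : u = fun y => ∫ t in s..y, f t := funext hu
  have hderiv : ∀ y : ℝ, HasDerivAt u (f y) y := by
    intro y
    rw [hueq]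
    exact (hfc.integral_hasStrictDerivAt s y).hasDerivAt
  have hderiv_eq : ∀ y : ℝ, deriv u y = f y := fun y => (hderiv y).deriv
  have hus : u s = 0 := by rw [hu s, intervalIntegral.integral_same]
  have hud : u d = 0 := by rw [hu d]; exact hC0
  -- f is strictly antitone on positive reals
  have hanti : StrictAntiOn (deriv u) (Icc s d) := by
    intro x hx y hy hxy
    rw [hderiv_eq, hderiv_eq]
    apply hinv_mono
    have hx0 : 0 < x := hs.trans_le hx.1
    have : x ^ 2 < y ^ 2 := by nlinarith
    linarith
  have hconc : StrictConcaveOn ℝ (Icc s d) u := by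
    apply StrictAntiOn.strictConcaveOn_of_deriv (convex_Icc s d)
      (fun x _ => (hderiv x).continuousAt.continuousWithinAt)
    exact hanti.mono interior_subset
  refine ⟨hus, hud, ?_, hconc, ?_, ?_⟩
  · intro y hy
    have hds : (0:ℝ) < d - s := by linarith
    have ha : 0 < (d - y) / (d - s) := by
      apply div_pos <;> linarith [hy.2]
    have hb : 0 < (y - s) / (d - s) := by
      apply div_pos <;> linarith [hy.1]
    have hab : (d - y) / (d - s) + (y - s) / (d - s) = 1 := by
      field_simp; ring
    have := hconc.2 (left_mem_Icc.mpr hsd.le) (right_mem_Icc.mpr hsd.le)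
      (ne_of_lt hsd) ha hb hab
    simp only [smul_eq_mul, hus, hud, mul_zero, add_zero] at this
    have hy' : (d - y) / (d - s) * s + (y - s) / (d - s) * d = y := by
      field_simp
      ring
    rwa [hy'] at this
  · intro y _
    exact ⟨hderiv y, hinv_right _⟩
  · intro y _
    have heq : (fun z : ℝ => Real.exp ((deriv u z ^ 2 - α ^ 2) / (2 * ε)) * deriv u z)
        = fun z : ℝ => C - z ^ 2 / 2 := by
      funext z
      rw [hderiv_eq z]
      have : Real.exp ((f z ^ 2 - α ^ 2) / (2 * ε)) * f z = h (f z) := by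
        rw [hh]; ring
      rw [this, hf]
      exact hinv_right _
    rw [heq]
    have := (hasDerivAt_const y C).sub ((hasDerivAt_pow 2 y).div_const 2)
    refine this.congr_deriv ?_
    push_cast
    norm_num
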